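/- For every n ≥ 1, the constant coefficient (coefficient of u_1^0 u_2^0 ··· u_n^0) of the Laurent polynomial ∏_{1 ≤ i ≠ j ≤ n} (1 - u_i/u_j) in ℤ[u_1^{±1}, ..., u_n^{±1}] equals n!. -/

import Mathlib

open AddMonoidAlgebra Finset

namespace Stmt13Aux

variable {n : ℕ}

/-- The exponent vector basis. -/
def dd (n : ℕ) (i : Fin n) : Fin n → ℤ := Pi.single i 1

/-- The generator `u_i` in the Laurent polynomial ring. -/
noncomputable def vv (n : ℕ) (i : Fin n) : AddMonoidAlgebra ℤ (Fin n → ℤ) :=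
  AddMonoidAlgebra.single (dd n i) 1

/-- The exponent vector of the monomial `∏ u_i^{π⁻¹ i}`. -/
def Ex (π : Equiv.Perm (Fin n)) : Fin n → ℤ := fun k => ((π.symm k : ℕ) : ℤ)

lemma prod_Ioi_pairs {M : Type*} [CommMonoid M] (f : Fin n → Fin n → M) :
    ∏ i : Fin n, ∏ j ∈ Finset.Ioi i, f i j
      = ∏ p ∈ Finset.univ.filter (fun p : Fin n × Fin n => p.1 < p.2), f p.1 p.2 := by
  rw [Finset.prod_sigma']
  refine Finset.prod_nbij' (fun p => (p.1, p.2)) (fun p => ⟨p.1, p.2⟩) ?_ ?_ ?_ ?_ ?_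
  · intro a ha
    simp only [Finset.mem_sigma, Finset.mem_Ioi] at ha
    simp [ha.2]
  · intro a ha
    simp only [Finset.mem_filter, Finset.mem_univ, true_and] at ha
    simp [Finset.mem_Ioi, ha]
  · intro a _; rfl
  · intro a _; rfl
  · intro a _; rfl

lemma Esum_eq (π : Equiv.Perm (Fin n)) :
    (∑ i : Fin n, (i : ℕ) • Pi.single (π i) (1 : ℤ)) = Ex π := by
  funext k
  simp only [Finset.sum_apply, Pi.smul_apply, Pi.single_apply, smul_ite, smul_zero]
  simp only [nsmul_eq_mul, mul_one]
  rw [Finset.sum_eq_single (π.symm k)]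
  · rw [if_pos (by rw [Equiv.apply_symm_apply])]
    rfl
  · intro i _ hi
    rw [if_neg]
    intro hc
    exact hi (by rw [hc, Equiv.symm_apply_apply])
  · intro hmem
    exact absurd (Finset.mem_univ _) hmem

/-- expansion of the Vandermonde determinant of the reordered generators -/
lemma det_vdm (g : Equiv.Perm (Fin n)) :
    Matrix.det (Matrix.vandermonde (fun i => vv n (g i)))
      = ∑ σ : Equiv.Perm (Fin n),
          AddMonoidAlgebra.single (Ex (σ.trans g)) ((Equiv.Perm.sign σ : ℤ)) := by
  rw [Matrix.det_apply]
  refine Finset.sum_congr rfl fun σ _ => ?_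
  have h : ∏ i, Matrix.vandermonde (fun i => vv n (g i)) (σ i) i
      = AddMonoidAlgebra.single (Ex (σ.trans g)) (1 : ℤ) := by
    simp only [Matrix.vandermonde_apply, vv, AddMonoidAlgebra.single_pow, one_pow]
    rw [AddMonoidAlgebra.prod_single, Finset.prod_const_one]
    congr 1
    have := Esum_eq (σ.trans g)
    simpa [dd] using this
  rw [h, Units.smul_def, AddMonoidAlgebra.smul_single', mul_one]

/-- the key exponent-matching condition -/
lemma key (σ τ : Equiv.Perm (Fin n)) :
    Ex σ + Ex (τ.trans Fin.revPerm) = (fun _ => (n : ℤ) - 1)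
      ↔ τ = Fin.revPerm * σ * Fin.revPerm := by
  constructor
  · intro h
    have h' : ∀ k, τ.symm (Fin.rev k) = Fin.rev (σ.symm k) := by
      intro k
      have hck := congrFun h k
      simp only [Ex, Pi.add_apply, Equiv.symm_trans_apply, Fin.revPerm_symm,
        Fin.revPerm_apply] at hck
      have h1 : (σ.symm k : ℕ) < n := (σ.symm k).isLt
      have h2 : (τ.symm (Fin.rev k) : ℕ) < n := (τ.symm (Fin.rev k)).isLt
      have h3 : ((Fin.rev (σ.symm k) : Fin n) : ℕ) = n - ((σ.symm k : ℕ) + 1) := Fin.val_rev _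
      apply Fin.ext
      omega
    refine Equiv.ext fun x => ?_
    have h2 := h' (σ (Fin.rev x))
    rw [Equiv.symm_apply_apply, Fin.rev_rev] at h2
    have h3 := congrArg τ h2
    rw [Equiv.apply_symm_apply] at h3
    rw [← h3]
    rfl
  · intro h
    subst h
    funext k
    simp only [Ex, Pi.add_apply, Equiv.symm_trans_apply, Fin.revPerm_symm, Fin.revPerm_apply]
    have hrw : (Fin.revPerm * σ * Fin.revPerm : Equiv.Perm (Fin n)).symm (Fin.rev k)
        = Fin.rev (σ.symm k) := by
      simp [Equiv.Perm.mul_def, Equiv.symm_trans_apply, Fin.rev_rev]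
    rw [hrw]
    have h1 : (σ.symm k : ℕ) < n := (σ.symm k).isLt
    have h3 : ((Fin.rev (σ.symm k) : Fin n) : ℕ) = n - ((σ.symm k : ℕ) + 1) := Fin.val_rev _
    rw [h3]
    have h4 : 1 ≤ n := Nat.one_le_iff_ne_zero.mpr (by rintro rfl; exact absurd k.isLt (by omega))
    omega
end Stmt13Aux

open Stmt13Aux

theorem stmt13 (n : ℕ) (hn : 1 ≤ n) :
    ((∏ p ∈ Finset.univ.filter (fun p : Fin n × Fin n => p.1 ≠ p.2),
        (1 - AddMonoidAlgebra.single (Pi.single p.1 1 - Pi.single p.2 1) 1) :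
      AddMonoidAlgebra ℤ (Fin n → ℤ)).coeff : (Fin n → ℤ) →₀ ℤ) 0 = (n.factorial : ℤ) := by
  classical
  set S : Finset (Fin n × Fin n) := Finset.univ.filter (fun p : Fin n × Fin n => p.1 ≠ p.2)
    with hS
  have stepA : ∀ p ∈ S, (1 - AddMonoidAlgebra.single (Pi.single p.1 1 - Pi.single p.2 1) 1 :
      AddMonoidAlgebra ℤ (Fin n → ℤ))
      = (vv n p.2 - vv n p.1) * AddMonoidAlgebra.single (-(dd n p.2)) 1 := by
    intro p _
    rw [sub_mul, vv, vv, AddMonoidAlgebra.single_mul_single, AddMonoidAlgebra.single_mul_single]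
    simp only [mul_one]
    have hd : Pi.single p.1 1 - Pi.single p.2 (1:ℤ) = dd n p.1 + -dd n p.2 := by
      simp [dd, sub_eq_add_neg]
    rw [add_neg_cancel, ← AddMonoidAlgebra.one_def, hd]
  have hsum : ∑ p ∈ S, dd n p.2 = (fun _ => (n : ℤ) - 1) := by
    have h := Finset.sum_filter_add_sum_filter_not Finset.univ
      (fun p : Fin n × Fin n => p.1 ≠ p.2) (fun p => dd n p.2)
    have hdiag : ∑ p ∈ Finset.univ.filter (fun p : Fin n × Fin n => ¬p.1 ≠ p.2), dd n p.2
        = ∑ j, dd n j := by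
      rw [Finset.sum_filter, Fintype.sum_prod_type]
      simp [Finset.sum_ite_eq]
    have huniv : ∑ p : Fin n × Fin n, dd n p.2 = n • ∑ j, dd n j := by
      rw [Fintype.sum_prod_type]
      simp [Finset.sum_const]
    rw [hdiag, huniv] at h
    have hS' : ∑ p ∈ S, dd n p.2 = n • (∑ j, dd n j) - ∑ j, dd n j := by
      rw [← h]; abel
    rw [hS']
    funext k
    have hj : (∑ j, dd n j) k = 1 := by
      simp only [dd, Finset.sum_apply]
      exact Fintype.sum_pi_single k (fun _ => (1 : ℤ))
    rw [Pi.sub_apply, Pi.smul_apply, hj]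
    simp
  -- Step B
  have stepB : (∏ p ∈ S, (1 - AddMonoidAlgebra.single (Pi.single p.1 1 - Pi.single p.2 1) 1 :
      AddMonoidAlgebra ℤ (Fin n → ℤ)))
      = (∏ p ∈ S, (vv n p.2 - vv n p.1))
        * AddMonoidAlgebra.single (-(fun _ => (n : ℤ) - 1) : Fin n → ℤ) 1 := by
    rw [Finset.prod_congr rfl stepA, Finset.prod_mul_distrib, AddMonoidAlgebra.prod_single,
      Finset.prod_const_one, Finset.sum_neg_distrib, hsum]
  -- Step D
  have stepD : (∏ p ∈ S, (vv n p.2 - vv n p.1))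
      = Matrix.det (Matrix.vandermonde (fun i => vv n ((1 : Equiv.Perm (Fin n)) i)))
        * Matrix.det (Matrix.vandermonde (fun i => vv n (Fin.revPerm i))) := by
    have hsplit : S = Finset.univ.filter (fun p : Fin n × Fin n => p.1 < p.2)
        ∪ Finset.univ.filter (fun p : Fin n × Fin n => p.2 < p.1) := by
      rw [← Finset.filter_or]
      ext p
      simp only [hS, Finset.mem_union, Finset.mem_filter, Finset.mem_univ, true_and]
      exact ne_iff_lt_or_gt
    have hdisj : Disjoint (Finset.univ.filter (fun p : Fin n × Fin n => p.1 < p.2))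
        (Finset.univ.filter (fun p : Fin n × Fin n => p.2 < p.1)) := by
      rw [Finset.disjoint_left]
      intro p hp hq
      simp only [Finset.mem_filter] at hp hq
      exact absurd (hp.2.trans hq.2) (lt_irrefl _)
    rw [hsplit, Finset.prod_union hdisj]
    congr 1
    · symm
      rw [Matrix.det_vandermonde, prod_Ioi_pairs]
      rfl
    · symm
      rw [Matrix.det_vandermonde, prod_Ioi_pairs]
      refine Finset.prod_nbij' (fun p => (Fin.rev p.1, Fin.rev p.2))
        (fun p => (Fin.rev p.1, Fin.rev p.2)) ?_ ?_ ?_ ?_ ?_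
      · intro p hp
        simp only [Finset.mem_filter, Finset.mem_univ, true_and] at hp ⊢
        exact Fin.rev_lt_rev.mpr hp
      · intro p hp
        simp only [Finset.mem_filter, Finset.mem_univ, true_and] at hp ⊢
        exact Fin.rev_lt_rev.mpr hp
      · intro p _; simp [Fin.rev_rev]
      · intro p _; simp [Fin.rev_rev]
      · intro p _; rfl
  -- Step F
  have stepF : ((Matrix.det (Matrix.vandermonde (fun i => vv n ((1 : Equiv.Perm (Fin n)) i)))
      * Matrix.det (Matrix.vandermonde (fun i => vv n (Fin.revPerm i))) :
        AddMonoidAlgebra ℤ (Fin n → ℤ)).coeff : (Fin n → ℤ) →₀ ℤ) (fun _ => (n : ℤ) - 1)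
      = (n.factorial : ℤ) := by
    rw [det_vdm (1 : Equiv.Perm (Fin n)), det_vdm Fin.revPerm, Finset.sum_mul_sum]
    simp only [AddMonoidAlgebra.single_mul_single]
    rw [AddMonoidAlgebra.coeff_sum, Finsupp.finset_sum_apply]
    have inner : ∀ σ : Equiv.Perm (Fin n),
        (∑ τ : Equiv.Perm (Fin n),
          AddMonoidAlgebra.single (Ex (σ.trans 1) + Ex (τ.trans Fin.revPerm))
            ((Equiv.Perm.sign σ : ℤ) * (Equiv.Perm.sign τ : ℤ)) : AddMonoidAlgebra ℤ (Fin n → ℤ)).coeff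
          (fun _ => (n : ℤ) - 1) = 1 := by
      intro σ
      rw [AddMonoidAlgebra.coeff_sum, Finsupp.finset_sum_apply]
      have hσ1 : σ.trans (1 : Equiv.Perm (Fin n)) = σ := Equiv.trans_refl σ
      rw [Finset.sum_eq_single (Fin.revPerm * σ * Fin.revPerm)]
      · rw [AddMonoidAlgebra.coeff_single, Finsupp.single_apply, if_pos, Equiv.Perm.sign_mul, Equiv.Perm.sign_mul]
        · have hs : (Equiv.Perm.sign (Fin.revPerm (n := n)) * Equiv.Perm.sign σ
                * Equiv.Perm.sign (Fin.revPerm (n := n)))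
              = Equiv.Perm.sign σ := by
            rw [mul_comm (Equiv.Perm.sign (Fin.revPerm (n := n))) (Equiv.Perm.sign σ), mul_assoc,
              Int.units_mul_self, mul_one]
          rw [hs]
          push_cast
          rw [← Units.val_mul, Int.units_mul_self, Units.val_one]
        · rw [hσ1]
          exact (key σ _).mpr rfl
      · intro τ _ hτ
        rw [AddMonoidAlgebra.coeff_single, Finsupp.single_apply, if_neg]
        intro hc
        exact hτ ((key σ τ).mp (hσ1 ▸ hc))
      · intro hmem
        exact absurd (Finset.mem_univ _) hmem
    calc _ = ∑ σ : Equiv.Perm (Fin n), (1 : ℤ) := Finset.sum_congr rfl fun σ _ => inner σ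
      _ = (n.factorial : ℤ) := by
        rw [Finset.sum_const, Finset.card_univ, Fintype.card_perm, Fintype.card_fin]
        simp
  rw [stepB, AddMonoidAlgebra.coeff_mul_single_apply, zero_add, neg_neg, mul_one, stepD]
  exact stepF
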